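/- Every vertex decomposable simplicial complex is shellable, and hence Cohen-Macaulay over every field. -/

import Mathlib

open Finset

open scoped Classical

/-- An (abstract) simplicial complex on the vertex set `[n] = Fin n`:
a downward-closed collection of finite subsets containing the empty set. -/
structure SC (n : ℕ) where
  faces : Finset (Finset (Fin n))
  down : ∀ F ∈ faces, ∀ G : Finset (Fin n), G ⊆ F → G ∈ faces
  empty_mem : (∅ : Finset (Fin n)) ∈ faces

namespace SC

variable {n : ℕ}

/-- `F` is a facet (inclusion-maximal face) of `Δ`. -/
def isFacet (Δ : SC n) (F : Finset (Fin n)) : Prop :=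
  F ∈ Δ.faces ∧ ∀ G ∈ Δ.faces, F ⊆ G → F = G

/-- The dimension of `Δ` (as an integer, so that `dim {∅} = -1`). -/
def dim (Δ : SC n) : ℤ :=
  ((Δ.faces.sup Finset.card : ℕ) : ℤ) - 1

/-- `Δ` is pure: all facets have the same cardinality (hence dimension). -/
def Pure (Δ : SC n) : Prop :=
  ∀ F G : Finset (Fin n), Δ.isFacet F → Δ.isFacet G → F.card = G.card

/-- The deletion `Δ_{-v}` of the vertex `v`. -/
noncomputable def del (Δ : SC n) (v : Fin n) : SC n where
  faces := Δ.faces.filter (fun F => v ∉ F)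
  down := by
    intro F hF G hG
    simp only [Finset.mem_filter] at *
    exact ⟨Δ.down F hF.1 G hG, fun hv => hF.2 (hG hv)⟩
  empty_mem := by simp [Δ.empty_mem]

/-- The link `link_Δ(v)` of the vertex `v`. -/
noncomputable def link (Δ : SC n) (v : Fin n) : SC n where
  faces := insert ∅ (Δ.faces.filter (fun F => v ∉ F ∧ insert v F ∈ Δ.faces))
  down := by
    intro F hF G hG
    simp only [Finset.mem_insert, Finset.mem_filter] at *
    rcases hF with h | ⟨h1, h2, h3⟩
    · left; subst h; exact Finset.subset_empty.mp hG
    · right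
      exact ⟨Δ.down F h1 G hG, fun hv => h2 (hG hv),
        Δ.down _ h3 _ (Finset.insert_subset_insert v hG)⟩
  empty_mem := by simp

/-- The link `link_Δ(S)` of a face `S`. -/
noncomputable def linkF (Δ : SC n) (S : Finset (Fin n)) : SC n where
  faces := insert ∅ (Δ.faces.filter (fun G => G ∩ S = ∅ ∧ G ∪ S ∈ Δ.faces))
  down := by
    intro F hF G hG
    simp only [Finset.mem_insert, Finset.mem_filter] at *
    rcases hF with h | ⟨h1, h2, h3⟩
    · left; subst h; exact Finset.subset_empty.mp hG
    · right
      refine ⟨Δ.down F h1 G hG, ?_, Δ.down _ h3 _ (Finset.union_subset_union_left hG)⟩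
      apply Finset.eq_empty_of_forall_notMem
      intro x hx
      simp only [Finset.mem_inter] at hx
      have : x ∈ F ∩ S := Finset.mem_inter.mpr ⟨hG hx.1, hx.2⟩
      simp [h2] at this
  empty_mem := by simp

/-- The restriction `Δ|_σ`. -/
noncomputable def restrict (Δ : SC n) (σ : Finset (Fin n)) : SC n where
  faces := Δ.faces.filter (fun F => F ⊆ σ)
  down := by
    intro F hF G hG
    simp only [Finset.mem_filter] at *
    exact ⟨Δ.down F hF.1 G hG, hG.trans hF.2⟩
  empty_mem := by simp [Δ.empty_mem]

/-- The subcomplex `Δ_{⟨-v⟩}` generated by the facets of `Δ` not containing `v`. -/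
noncomputable def genDel (Δ : SC n) (v : Fin n) : SC n where
  faces := insert ∅ (Δ.faces.filter (fun G => ∃ F ∈ Δ.faces, Δ.isFacet F ∧ v ∉ F ∧ G ⊆ F))
  down := by
    intro F hF G hG
    simp only [Finset.mem_insert, Finset.mem_filter] at *
    rcases hF with h | ⟨h1, F', hF'⟩
    · left; subst h; exact Finset.subset_empty.mp hG
    · right
      exact ⟨Δ.down F h1 G hG, F', hF'.1, hF'.2.1, hF'.2.2.1, hG.trans hF'.2.2.2⟩
  empty_mem := by simp

/-- `Δ` is a cone with apex `v`: every facet contains `v`. -/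
def IsCone (Δ : SC n) (v : Fin n) : Prop :=
  ∀ F, Δ.isFacet F → v ∈ F

end SC

section Margins

variable {n : ℕ}

/-- The `F`-margin of a table `T`, evaluated at the assignment `a` on `F`:
the sum of the entries of `T` over all cells agreeing with `a` on `F`. -/
def margin {R : Type*} [AddCommMonoid R] (d : Fin n → ℕ) (T : (∀ j, Fin (d j)) → R)
    (F : Finset (Fin n)) (a : ∀ j, Fin (d j)) : R :=
  ∑ b ∈ Finset.univ.filter (fun b : ∀ j, Fin (d j) => ∀ j ∈ F, b j = a j), T b

/-- `T` lies in the kernel of the marginal (design) matrix `M(Δ,d)` of the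
hierarchical model: all margins along facets of `Δ` vanish. -/
def inKer {R : Type*} [AddCommMonoid R] (Δ : SC n) (d : Fin n → ℕ)
    (T : (∀ j, Fin (d j)) → R) : Prop :=
  ∀ F : Finset (Fin n), Δ.isFacet F → ∀ a, margin d T F a = 0

end Margins
section Cohomology

variable {n : ℕ}

/-- Reduced simplicial cochains "of size `s`" (i.e. cohomological degree `s-1`):
functions on the faces of `Δ` with `s` vertices, with values in `K`.
For `s = 0` this is the span of the empty face. -/
abbrev Cch (Δ : SC n) (K : Type) [Field K] (s : ℕ) : Type :=
  {F : Finset (Fin n) // F ∈ Δ.faces ∧ F.card = s} → K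

/-- The simplicial coboundary map from cochains of size `s` (degree `s-1`)
to cochains of size `s+1` (degree `s`), with the usual signs. -/
noncomputable def deltaLin (Δ : SC n) (K : Type) [Field K] (s : ℕ) :
    Cch Δ K s →ₗ[K] Cch Δ K (s + 1) where
  toFun φ := fun F => ∑ v ∈ F.1.attach,
    ((-1 : K) ^ ((F.1.filter (fun w => w < v.1)).card)) *
      φ ⟨F.1.erase v.1,
        ⟨Δ.down F.1 F.2.1 _ (Finset.erase_subset _ _), by
          simp [Finset.card_erase_of_mem v.2, F.2.2]⟩⟩
  map_add' φ ψ := by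
    funext F
    simp only [Pi.add_apply, mul_add, Finset.sum_add_distrib]
  map_smul' c φ := by
    funext F
    simp only [Pi.smul_apply, smul_eq_mul, RingHom.id_apply, Finset.mul_sum]
    exact Finset.sum_congr rfl (fun v _ => by ring)

/-- The reduced simplicial cohomology `H̃^j(Δ; K)` (for `j ≥ 0`) is nonzero:
there is a `j`-cocycle which is not a coboundary. -/
def HredNe (Δ : SC n) (K : Type) [Field K] (j : ℕ) : Prop :=
  ∃ φ : Cch Δ K (j + 1), deltaLin Δ K (j + 1) φ = 0 ∧
    ∀ ψ : Cch Δ K j, deltaLin Δ K j ψ ≠ φ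

/-- The reduced simplicial cohomology `H̃^j(Δ; K)` is one-dimensional (`≅ K`). -/
def HOneDim (Δ : SC n) (K : Type) [Field K] (j : ℕ) : Prop :=
  ∃ φ : Cch Δ K (j + 1), deltaLin Δ K (j + 1) φ = 0 ∧
    (∀ ψ : Cch Δ K j, deltaLin Δ K j ψ ≠ φ) ∧
    ∀ φ' : Cch Δ K (j + 1), deltaLin Δ K (j + 1) φ' = 0 →
      ∃ (c : K) (ψ : Cch Δ K j), φ' = c • φ + deltaLin Δ K j ψ

/-- `dim_K H̃^{s-1}(Δ; K)`, computed from the cochain complex. -/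
noncomputable def hdim (Δ : SC n) (K : Type) [Field K] (s : ℕ) : ℕ :=
  Module.finrank K (LinearMap.ker (deltaLin Δ K s)) -
    (if s = 0 then 0 else Module.finrank K (LinearMap.range (deltaLin Δ K (s - 1))))

/-- The graded Betti number `β_{i,j}` of the Stanley-Reisner ring of `Δ`,
over the polynomial ring on the variables indexed by `W`, as given by
Hochster's formula: `β_{i,j}(R/I_Δ) = Σ_{σ ⊆ W, |σ|=j} dim_K H̃^{j-i-1}(Δ|_σ; K)`. -/
noncomputable def bettiOn (W : Finset (Fin n)) (Δ : SC n) (K : Type) [Field K]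
    (i j : ℕ) : ℕ :=
  ∑ σ ∈ W.powerset.filter (fun σ => σ.card = j), hdim (Δ.restrict σ) K (j - i)

/-- Reisner's criterion: `Δ` is Cohen-Macaulay over `K` iff for every face `F`,
the reduced cohomology of `link_Δ(F)` vanishes below its dimension. -/
def IsCM (Δ : SC n) (K : Type) [Field K] : Prop :=
  ∀ F ∈ Δ.faces, ∀ i : ℕ, (i : ℤ) < (Δ.linkF F).dim → ¬ HredNe (Δ.linkF F) K i

/-- `Δ` is disconnected (equivalently, `H̃^0(Δ;K) ≠ 0`): its vertex set splits into
two nonempty parts with no edge between them. -/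
def Disconn (Δ : SC n) : Prop :=
  ∃ A B : Finset (Fin n),
    (∃ a ∈ A, ({a} : Finset (Fin n)) ∈ Δ.faces) ∧
    (∃ b ∈ B, ({b} : Finset (Fin n)) ∈ Δ.faces) ∧
    Disjoint A B ∧ (∀ w : Fin n, ({w} : Finset (Fin n)) ∈ Δ.faces → w ∈ A ∪ B) ∧
    ∀ a ∈ A, ∀ b ∈ B, ({a, b} : Finset (Fin n)) ∉ Δ.faces

end Cohomology
section VD

variable {n : ℕ}

/-- Vertex decomposability: `Δ` is pure, and is either `{∅}` or has a vertex `v`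
whose deletion and link are both vertex decomposable. -/
inductive IsVD : {n : ℕ} → SC n → Prop
  | triv {n : ℕ} (Δ : SC n) (h : Δ.faces = {∅}) : IsVD Δ
  | step {n : ℕ} (Δ : SC n) (hp : Δ.Pure) (v : Fin n)
      (hd : IsVD (Δ.del v)) (hl : IsVD (Δ.link v)) : IsVD Δ

/-- `Δ` is shellable: its facets admit an ordering `F_1, …, F_t` such that for each
`k ≥ 2` the complex `(⋃_{i<k} ⟨F_i⟩) ∩ ⟨F_k⟩` is pure of dimension `dim F_k - 1`,
i.e. every face of it is contained in a face of it of cardinality `|F_k| - 1`. -/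
def Shellable (Δ : SC n) : Prop :=
  ∃ L : List (Finset (Fin n)), L.Nodup ∧ (∀ F, Δ.isFacet F ↔ F ∈ L) ∧
    ∀ (k : ℕ) (hk : k < L.length), 0 < k →
      ∀ G : Finset (Fin n), G ⊆ L.get ⟨k, hk⟩ →
        (∃ (i : ℕ) (hi : i < L.length), i < k ∧ G ⊆ L.get ⟨i, hi⟩) →
        ∃ G' : Finset (Fin n), G ⊆ G' ∧ G' ⊆ L.get ⟨k, hk⟩ ∧
          G'.card = (L.get ⟨k, hk⟩).card - 1 ∧
          ∃ (i : ℕ) (hi : i < L.length), i < k ∧ G' ⊆ L.get ⟨i, hi⟩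

end VD

section Ideals

variable {n : ℕ}

/-- The Stanley-Reisner ideal of `Δ`: the ideal of `K[x_1,…,x_n]` generated by the
squarefree monomials `x_σ = ∏_{i ∈ σ} x_i` for the non-faces `σ ∉ Δ`. -/
noncomputable def SRideal (K : Type) [Field K] (Δ : SC n) : Ideal (MvPolynomial (Fin n) K) :=
  Ideal.span ((fun σ : Finset (Fin n) => ∏ i ∈ σ, (MvPolynomial.X i : MvPolynomial (Fin n) K)) ''
    {σ : Finset (Fin n) | σ ∉ Δ.faces})

end Ideals

section Misc

/-- The trivial complex `{∅}` on `[n]`. -/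
noncomputable def trivialSC (n : ℕ) : SC n where
  faces := {∅}
  down := by
    intro F hF G hG
    simp only [Finset.mem_singleton] at *
    subst hF
    exact Finset.subset_empty.mp hG
  empty_mem := by simp

/-- The alternating 0-1 vector `ε_k` with blocks of length `k`: entry `i` is the
parity of `i / k`, so it consists of alternating blocks of `k` zeros and `k` ones. -/
def epsFun (k i : ℕ) : ℕ := (i / k) % 2

/-- The vector `α` defined by `α_1 = (0)` and `α_d = (α_{d-1}, complement α_{d-1})`:
entry `i` is the parity of the binary digit sum of `i` (Thue–Morse). -/
def alphaFun (i : ℕ) : ℕ := (Nat.digits 2 i).sum % 2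

end Misc
section VDProof

open Finset

variable {n : ℕ}

theorem SC.ext' {Δ Γ : SC n} (h : Δ.faces = Γ.faces) : Δ = Γ := by
  cases Δ; cases Γ; simpa using h

/-- every face is contained in a facet -/
theorem SC.exists_facet (Δ : SC n) (F : Finset (Fin n)) (hF : F ∈ Δ.faces) :
    ∃ G, Δ.isFacet G ∧ F ⊆ G := by
  classical
  obtain ⟨G, hG, hmax'⟩ := Finset.exists_maximal (s := Δ.faces.filter (fun G => F ⊆ G))
    ⟨F, by simp [hF]⟩
  have hmax : ∀ H ∈ Δ.faces.filter (fun G => F ⊆ G), ¬ G < H :=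
    fun H hH hlt => hlt.2 (hmax' hH hlt.1)
  simp only [Finset.mem_filter] at hG
  refine ⟨G, ⟨hG.1, ?_⟩, hG.2⟩
  intro H hH hGH
  by_contra hne
  exact hmax H (Finset.mem_filter.mpr ⟨hH, hG.2.trans hGH⟩)
    (lt_of_le_of_ne hGH (by simpa using hne))

theorem SC.card_le_sup (Δ : SC n) {F : Finset (Fin n)} (hF : F ∈ Δ.faces) :
    F.card ≤ Δ.faces.sup Finset.card := Finset.le_sup hF

/-- there exists a facet of maximal cardinality -/
theorem SC.exists_max_facet (Δ : SC n) :
    ∃ G, Δ.isFacet G ∧ G.card = Δ.faces.sup Finset.card := by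
  obtain ⟨F, hF, hFc⟩ := Finset.exists_mem_eq_sup Δ.faces ⟨∅, Δ.empty_mem⟩ Finset.card
  obtain ⟨G, hG, hFG⟩ := Δ.exists_facet F hF
  refine ⟨G, hG, le_antisymm (Δ.card_le_sup hG.1) ?_⟩
  rw [hFc]
  exact Finset.card_le_card hFG

theorem SC.facet_card (Δ : SC n) (hp : Δ.Pure) {F : Finset (Fin n)} (hF : Δ.isFacet F) :
    F.card = Δ.faces.sup Finset.card := by
  obtain ⟨G, hG, hGc⟩ := Δ.exists_max_facet
  rw [← hGc]; exact hp F G hF hG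

/-- the sign `(-1)^{#\{w ∈ F : w < v\}}` -/
noncomputable def sgn (K : Type) [Field K] {n : ℕ} (v : Fin n) (F : Finset (Fin n)) : K :=
  (-1 : K) ^ ((F.filter (fun w => w < v)).card)

variable {K : Type} [Field K]

theorem sgn_sq (v : Fin n) (F : Finset (Fin n)) : sgn K v F * sgn K v F = 1 := by
  rw [sgn, ← pow_add]
  exact Even.neg_one_pow ⟨_, rfl⟩

theorem sgn_ne_zero (v : Fin n) (F : Finset (Fin n)) : sgn K v F ≠ 0 := by
  rw [sgn]
  exact pow_ne_zero _ (by norm_num)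

theorem sgn_insert_self (v : Fin n) (F : Finset (Fin n)) :
    sgn K v (insert v F) = sgn K v F := by
  rw [sgn, sgn, Finset.filter_insert, if_neg (lt_irrefl v)]

theorem card_filter_erase {u : Fin n} {F : Finset (Fin n)} (hu : u ∈ F) (x : Fin n) :
    (F.filter (fun w => w < x)).card
      = ((F.erase u).filter (fun w => w < x)).card + (if u < x then 1 else 0) := by
  conv_lhs => rw [← Finset.insert_erase hu]
  rw [Finset.filter_insert]
  split_ifs with h
  · rw [Finset.card_insert_of_notMem (fun hc => (Finset.notMem_erase u F)
      (Finset.mem_filter.mp hc).1)]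
  · simp

theorem sgn_swap {u w : Fin n} {F : Finset (Fin n)} (hu : u ∈ F) (hw : w ∈ F)
    (hne : u ≠ w) :
    sgn K w F * sgn K u (F.erase w) = -(sgn K u F * sgn K w (F.erase u)) := by
  have hcomm : (F.erase w).erase u = (F.erase u).erase w := by
    ext x; simp [and_left_comm, and_comm]
  have hu' : u ∈ F.erase w := Finset.mem_erase.mpr ⟨hne, hu⟩
  have hw' : w ∈ F.erase u := Finset.mem_erase.mpr ⟨(Ne.symm hne), hw⟩
  set bw := (((F.erase u).erase w).filter (fun x => x < w)).card with hbw
  set bu := (((F.erase u).erase w).filter (fun x => x < u)).card with hbu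
  have A4 : ((F.erase u).filter (fun x => x < w)).card = bw := by
    have := card_filter_erase hw' w
    simpa using this
  have A3 : ((F.erase w).filter (fun x => x < u)).card = bu := by
    have := card_filter_erase hu' u
    rw [hcomm] at this
    simpa using this
  have A1 : (F.filter (fun x => x < w)).card = bw + (if u < w then 1 else 0) := by
    rw [card_filter_erase hu w, A4]
  have A2 : (F.filter (fun x => x < u)).card = bu + (if w < u then 1 else 0) := by
    rw [card_filter_erase hw u, A3]
  rw [sgn, sgn, sgn, sgn, A1, A2, A3, A4]
  rcases hne.lt_or_gt with h | h
  · rw [if_pos h, if_neg h.asymm]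
    rw [pow_succ]
    ring
  · rw [if_neg h.asymm, if_pos h]
    rw [pow_succ]
    ring

/-- identity A: for `v ∉ H`, `w ∈ H` -/
theorem sgn_A {v w : Fin n} {H : Finset (Fin n)} (hv : v ∉ H) (hw : w ∈ H) :
    sgn K w (insert v H) * sgn K v (H.erase w) = -(sgn K v H * sgn K w H) := by
  have hne : v ≠ w := fun h => hv (h ▸ hw)
  have h1 := sgn_swap (K := K) (F := insert v H) (u := v) (w := w)
    (Finset.mem_insert_self v H) (Finset.mem_insert_of_mem hw) hne
  rw [Finset.erase_insert_of_ne hne, sgn_insert_self,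
    Finset.erase_insert hv, sgn_insert_self] at h1
  exact h1

/-- identity B: for `v ∉ H`, `w ∈ H` -/
theorem sgn_B {v w : Fin n} {H : Finset (Fin n)} (hv : v ∉ H) (hw : w ∈ H) :
    sgn K w H * sgn K v (H.erase w) = -(sgn K v H * sgn K w (insert v H)) := by
  have hA := sgn_A (K := K) hv hw
  have h1 : sgn K w (insert v H) ≠ 0 := sgn_ne_zero _ _
  apply mul_left_cancel₀ h1
  have hs := sgn_sq (K := K) w (insert v H)
  linear_combination sgn K w H * hA + sgn K v H * hs - sgn K v H * sgn_sq (K := K) w H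

end VDProof
section VDProof2

open Finset

variable {n : ℕ} {K : Type} [Field K]

/-- the unrestricted coboundary operator -/
noncomputable def Dop (K : Type) [Field K] {n : ℕ} (f : Finset (Fin n) → K)
    (F : Finset (Fin n)) : K :=
  ∑ w ∈ F, sgn K w F * f (F.erase w)

theorem Dop_add (f g : Finset (Fin n) → K) (F : Finset (Fin n)) :
    Dop K (fun G => f G + g G) F = Dop K f F + Dop K g F := by
  rw [Dop, Dop, Dop, ← Finset.sum_add_distrib]
  exact Finset.sum_congr rfl (fun w _ => by ring)

theorem Dop_sub (f g : Finset (Fin n) → K) (F : Finset (Fin n)) :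
    Dop K (fun G => f G - g G) F = Dop K f F - Dop K g F := by
  rw [Dop, Dop, Dop, ← Finset.sum_sub_distrib]
  exact Finset.sum_congr rfl (fun w _ => by ring)

theorem Dop_Dop (f : Finset (Fin n) → K) (F : Finset (Fin n)) :
    Dop K (Dop K f) F = 0 := by
  classical
  have hstep : Dop K (Dop K f) F
      = ∑ p ∈ F ×ˢ F, (if p.2 ≠ p.1 then
          sgn K p.1 F * (sgn K p.2 (F.erase p.1) * f ((F.erase p.1).erase p.2)) else 0) := by
    rw [Finset.sum_product, Dop]
    refine Finset.sum_congr rfl (fun w hw => ?_)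
    rw [Dop, Finset.mul_sum, ← Finset.filter_ne' F w, Finset.sum_filter]
    rw [Finset.filter_ne' F w]
  rw [hstep]
  refine Finset.sum_involution (fun a _ => Prod.swap a) ?_ ?_ ?_ ?_
  · rintro ⟨w, u⟩ ha
    simp only [Finset.mem_product] at ha
    by_cases h : u = w
    · subst h; simp
    · simp only [Prod.swap]
      rw [if_pos h, if_pos (Ne.symm h)]
      have hc : (F.erase w).erase u = (F.erase u).erase w := by
        ext x; simp [and_left_comm, and_comm]
      rw [← hc]
      have := sgn_swap (K := K) ha.2 ha.1 h
      linear_combination f ((F.erase w).erase u) * this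
  · rintro ⟨w, u⟩ ha hne heq
    apply hne
    have : u = w := by
      have := (Prod.ext_iff.mp heq).1
      simpa using this
    rw [if_neg (by simp [this])]
  · rintro ⟨w, u⟩ ha
    simp only [Finset.mem_product] at ha ⊢
    exact ⟨ha.2, ha.1⟩
  · rintro ⟨w, u⟩ ha
    rfl

end VDProof2
section VDProof3

open Finset

variable {n : ℕ}

theorem SC.mem_del_iff (Δ : SC n) (v : Fin n) (G : Finset (Fin n)) :
    G ∈ (Δ.del v).faces ↔ G ∈ Δ.faces ∧ v ∉ G := by
  simp [SC.del]

theorem SC.mem_link_iff (Δ : SC n) (v : Fin n) (G : Finset (Fin n)) :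
    G ∈ (Δ.link v).faces ↔ G = ∅ ∨ (G ∈ Δ.faces ∧ v ∉ G ∧ insert v G ∈ Δ.faces) := by
  simp [SC.link, and_assoc]

theorem SC.mem_link_iff' (Δ : SC n) (v : Fin n) (h1 : ({v} : Finset (Fin n)) ∈ Δ.faces)
    (G : Finset (Fin n)) :
    G ∈ (Δ.link v).faces ↔ G ∈ Δ.faces ∧ v ∉ G ∧ insert v G ∈ Δ.faces := by
  rw [SC.mem_link_iff]
  constructor
  · rintro (rfl | h)
    · exact ⟨Δ.empty_mem, by simp, by simpa using h1⟩
    · exact h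
  · exact fun h => Or.inr h

theorem SC.del_eq_self (Δ : SC n) (v : Fin n) (h : ({v} : Finset (Fin n)) ∉ Δ.faces) :
    Δ.del v = Δ := by
  apply SC.ext'
  ext G
  rw [SC.mem_del_iff]
  refine ⟨fun h' => h'.1, fun h' => ⟨h', fun hv => h ?_⟩⟩
  exact Δ.down G h' {v} (by simpa using hv)

theorem SC.isVD_pure {Δ : SC n} (h : IsVD Δ) : Δ.Pure := by
  cases h with
  | triv Δ h =>
    intro F G hF hG
    have h1 : F ∈ ({∅} : Finset (Finset (Fin n))) := h ▸ hF.1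
    have h2 : G ∈ ({∅} : Finset (Finset (Fin n))) := h ▸ hG.1
    simp only [Finset.mem_singleton] at h1 h2
    rw [h1, h2]
  | step Δ hp v hd hl => exact hp

theorem SC.facet_del_of_facet {Δ : SC n} {v : Fin n} {F : Finset (Fin n)}
    (hF : Δ.isFacet F) (hv : v ∉ F) : (Δ.del v).isFacet F := by
  refine ⟨(Δ.mem_del_iff v F).mpr ⟨hF.1, hv⟩, fun G hG hFG => ?_⟩
  exact hF.2 G ((Δ.mem_del_iff v G).mp hG).1 hFG

theorem SC.facet_of_facet_del {Δ : SC n} {v : Fin n} {F F0 : Finset (Fin n)}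
    (hp : Δ.Pure) (hpd : (Δ.del v).Pure) (hF0 : Δ.isFacet F0) (hv0 : v ∉ F0)
    (hF : (Δ.del v).isFacet F) : Δ.isFacet F := by
  have hFfaces : F ∈ Δ.faces := ((Δ.mem_del_iff v F).mp hF.1).1
  have hvF : v ∉ F := ((Δ.mem_del_iff v F).mp hF.1).2
  obtain ⟨G, hG, hFG⟩ := Δ.exists_facet F hFfaces
  by_cases hvG : v ∈ G
  · exfalso
    -- then F = G.erase v, of card one less than a facet
    have hFsub : F ⊆ G.erase v := fun x hx =>
      Finset.mem_erase.mpr ⟨fun he => hvF (he ▸ hx), hFG hx⟩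
    have hGe : G.erase v ∈ (Δ.del v).faces := (Δ.mem_del_iff v _).mpr
      ⟨Δ.down G hG.1 _ (Finset.erase_subset _ _), Finset.notMem_erase _ _⟩
    have hFeq : F = G.erase v := hF.2 _ hGe hFsub
    have hF0del : (Δ.del v).isFacet F0 := SC.facet_del_of_facet hF0 hv0
    have hc1 : F.card = F0.card := hpd F F0 hF hF0del
    have hc2 : F0.card = G.card := hp F0 G hF0 hG
    have hc3 : (G.erase v).card = G.card - 1 := Finset.card_erase_of_mem hvG
    have hpos : 0 < G.card := Finset.card_pos.mpr ⟨v, hvG⟩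
    have hc4 : F.card = G.card - 1 := by rw [hFeq, hc3]
    omega
  · have : F = G := hF.2 G ((Δ.mem_del_iff v G).mpr ⟨hG.1, hvG⟩) hFG
    rw [this]; exact hG

theorem SC.facet_link_of_facet {Δ : SC n} {v : Fin n} {F : Finset (Fin n)}
    (h1 : ({v} : Finset (Fin n)) ∈ Δ.faces)
    (hF : Δ.isFacet F) (hv : v ∈ F) : (Δ.link v).isFacet (F.erase v) := by
  constructor
  · rw [Δ.mem_link_iff' v h1]
    exact ⟨Δ.down F hF.1 _ (Finset.erase_subset _ _), Finset.notMem_erase _ _,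
      by rw [Finset.insert_erase hv]; exact hF.1⟩
  · intro G hG hFG
    rw [Δ.mem_link_iff' v h1] at hG
    have hsub : F ⊆ insert v G := by
      intro x hx
      by_cases hxv : x = v
      · simp [hxv]
      · exact Finset.mem_insert_of_mem (hFG (Finset.mem_erase.mpr ⟨hxv, hx⟩))
    have := hF.2 _ hG.2.2 hsub
    rw [this, Finset.erase_insert hG.2.1]

theorem SC.facet_of_facet_link {Δ : SC n} {v : Fin n} {G : Finset (Fin n)}
    (h1 : ({v} : Finset (Fin n)) ∈ Δ.faces)
    (hG : (Δ.link v).isFacet G) : Δ.isFacet (insert v G) ∧ v ∉ G := by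
  obtain ⟨hGmem, hmax⟩ := hG
  rw [Δ.mem_link_iff' v h1] at hGmem
  obtain ⟨hGf, hvG, hins⟩ := hGmem
  refine ⟨⟨hins, fun H hH hsub => ?_⟩, hvG⟩
  have hvH : v ∈ H := hsub (Finset.mem_insert_self v G)
  have hHe : H.erase v ∈ (Δ.link v).faces := by
    rw [Δ.mem_link_iff' v h1]
    exact ⟨Δ.down H hH _ (Finset.erase_subset _ _), Finset.notMem_erase _ _,
      by rw [Finset.insert_erase hvH]; exact hH⟩
  have hGsub : G ⊆ H.erase v := fun x hx => Finset.mem_erase.mpr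
    ⟨fun he => hvG (he ▸ hx), hsub (Finset.mem_insert_of_mem hx)⟩
  have := hmax _ hHe hGsub
  rw [this, Finset.insert_erase hvH]

theorem SC.cone_insert {Δ : SC n} {v : Fin n} (hc : Δ.IsCone v)
    {F : Finset (Fin n)} (hF : F ∈ Δ.faces) : insert v F ∈ Δ.faces := by
  obtain ⟨G, hG, hFG⟩ := Δ.exists_facet F hF
  exact Δ.down G hG.1 _ (Finset.insert_subset (hc G hG) hFG)

theorem SC.sup_del {Δ : SC n} {v : Fin n} {F0 : Finset (Fin n)}
    (hp : Δ.Pure) (hF0 : Δ.isFacet F0) (hv0 : v ∉ F0) :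
    (Δ.del v).faces.sup Finset.card = Δ.faces.sup Finset.card := by
  apply le_antisymm
  · apply Finset.sup_le
    intro G hG
    exact Δ.card_le_sup ((Δ.mem_del_iff v G).mp hG).1
  · rw [← Δ.facet_card hp hF0]
    exact Finset.le_sup ((Δ.mem_del_iff v F0).mpr ⟨hF0.1, hv0⟩)

theorem SC.sup_link {Δ : SC n} {v : Fin n}
    (hp : Δ.Pure) (h1 : ({v} : Finset (Fin n)) ∈ Δ.faces) :
    (Δ.link v).faces.sup Finset.card = Δ.faces.sup Finset.card - 1 := by
  obtain ⟨F, hF, hvF⟩ := Δ.exists_facet {v} h1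
  have hvmem : v ∈ F := hvF (by simp)
  have hcF : F.card = Δ.faces.sup Finset.card := Δ.facet_card hp hF
  apply le_antisymm
  · apply Finset.sup_le
    intro G hG
    rw [Δ.mem_link_iff' v h1] at hG
    have := Δ.card_le_sup hG.2.2
    rw [Finset.card_insert_of_notMem hG.2.1] at this
    omega
  · have hFe : F.erase v ∈ (Δ.link v).faces := by
      rw [Δ.mem_link_iff' v h1]
      exact ⟨Δ.down F hF.1 _ (Finset.erase_subset _ _), Finset.notMem_erase _ _,
        by rw [Finset.insert_erase hvmem]; exact hF.1⟩
    have := Finset.le_sup (f := Finset.card) hFe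
    rw [Finset.card_erase_of_mem hvmem, hcF] at this
    omega

end VDProof3
section VDProof4

open Finset

variable {n : ℕ}

theorem sgn_singleton (K : Type) [Field K] (x : Fin n) : sgn K x {x} = 1 := by
  rw [sgn]
  have : ({x} : Finset (Fin n)).filter (fun w => w < x) = ∅ := by
    ext y; simp (config := {contextual := true}) [lt_irrefl]
  rw [this]; simp

/-- Main vanishing theorem for vertex-decomposable complexes. -/
theorem vd_vanish {Δ : SC n} (h : IsVD Δ) (K : Type) [Field K] :
    ∀ c : ℕ, c < Δ.faces.sup Finset.card →
    ∀ f : Finset (Fin n) → K, (∀ F ∈ Δ.faces, F.card = c + 1 → Dop K f F = 0) →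
    ∃ g, ∀ F ∈ Δ.faces, F.card = c → Dop K g F = f F := by
  induction h with
  | triv Δ h =>
    intro c hc
    rw [h] at hc
    simp at hc
  | step Δ hp v hd hl ihd ihl =>
    intro c hc f hf
    -- base case c = 0 : connectivity-type argument is not needed, just f ∅ = 0
    rcases Nat.eq_zero_or_pos c with rfl | hc1
    · obtain ⟨G, hG, hGc⟩ := Δ.exists_max_facet
      have hGne : G.Nonempty := by
        rw [← Finset.card_pos, hGc]; omega
      obtain ⟨x, hx⟩ := hGne
      have hxf : ({x} : Finset (Fin n)) ∈ Δ.faces :=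
        Δ.down G hG.1 {x} (by simpa using hx)
      have h0 : f ∅ = 0 := by
        have := hf {x} hxf (by simp)
        rw [Dop, Finset.sum_singleton, sgn_singleton, Finset.erase_singleton, one_mul] at this
        exact this
      refine ⟨fun _ => 0, fun F hF hcF => ?_⟩
      rw [Finset.card_eq_zero] at hcF
      subst hcF
      rw [Dop, Finset.sum_empty, h0]
    by_cases h1 : ({v} : Finset (Fin n)) ∈ Δ.faces
    · by_cases hcone : ∀ F0, Δ.isFacet F0 → v ∈ F0
      · -- cone case: explicit contracting homotopy
        refine ⟨fun G => if v ∈ G then 0 else sgn K v G * f (insert v G), fun F hF hcF => ?_⟩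
        by_cases hvF : v ∈ F
        · have hins : insert v (F.erase v) = F := Finset.insert_erase hvF
          have hvH : v ∉ F.erase v := Finset.notMem_erase _ _
          rw [Dop, Finset.sum_eq_single_of_mem v hvF (fun w hw hne => ?side)]
          · rw [if_neg hvH]
            have hs : sgn K v F = sgn K v (F.erase v) := by
              conv_lhs => rw [← hins]
              rw [sgn_insert_self]
            rw [hs, hins]
            linear_combination f F * sgn_sq (K := K) v (F.erase v)
          case side =>
            rw [if_pos (Finset.mem_erase.mpr ⟨Ne.symm hne, hvF⟩), mul_zero]
        · have hiF : insert v F ∈ Δ.faces := SC.cone_insert hcone hF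
          have hicard : (insert v F).card = c + 1 := by
            rw [Finset.card_insert_of_notMem hvF, hcF]
          have hDf := hf _ hiF hicard
          rw [Dop, Finset.sum_insert hvF, Finset.erase_insert hvF] at hDf
          have hsum : ∑ w ∈ F, sgn K w (insert v F) * f ((insert v F).erase w)
              = ∑ w ∈ F, sgn K w (insert v F) * f (insert v (F.erase w)) := by
            refine Finset.sum_congr rfl fun w hw => ?_
            rw [Finset.erase_insert_of_ne (fun he => hvF (by rw [he]; exact hw))]
          rw [hsum] at hDf
          calc Dop K (fun G => if v ∈ G then 0 else sgn K v G * f (insert v G)) F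
              = ∑ w ∈ F, -(sgn K v F) * (sgn K w (insert v F) * f (insert v (F.erase w))) := by
                rw [Dop]
                refine Finset.sum_congr rfl fun w hw => ?_
                rw [if_neg (fun hc' => hvF (Finset.erase_subset _ _ hc'))]
                linear_combination f (insert v (F.erase w)) * sgn_B (K := K) hvF hw
            _ = -(sgn K v F) * ∑ w ∈ F, sgn K w (insert v F) * f (insert v (F.erase w)) := by
                rw [Finset.mul_sum]
            _ = f F := by
                have h2 : ∑ w ∈ F, sgn K w (insert v F) * f (insert v (F.erase w))
                    = -(sgn K v (insert v F) * f F) := by linear_combination hDf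
                rw [h2, sgn_insert_self]
                linear_combination f F * sgn_sq (K := K) v F
      · -- non-cone case: Mayer–Vietoris style induction
        push_neg at hcone
        obtain ⟨F0, hF0, hv0⟩ := hcone
        have hsupd : (Δ.del v).faces.sup Finset.card = Δ.faces.sup Finset.card :=
          SC.sup_del hp hF0 hv0
        have hsupl : (Δ.link v).faces.sup Finset.card = Δ.faces.sup Finset.card - 1 :=
          SC.sup_link hp h1
        -- step 1: solve on the deletion
        have hfdel : ∀ F ∈ (Δ.del v).faces, F.card = c + 1 →
            Dop K (fun G => if v ∈ G then 0 else f G) F = 0 := by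
          intro F hFd hcF
          obtain ⟨hFf, hvF⟩ := (Δ.mem_del_iff v F).mp hFd
          have : Dop K (fun G => if v ∈ G then 0 else f G) F = Dop K f F := by
            rw [Dop, Dop]
            refine Finset.sum_congr rfl fun w hw => ?_
            rw [if_neg (fun hc' => hvF (Finset.erase_subset _ _ hc'))]
          rw [this]
          exact hf F hFf hcF
        obtain ⟨g0, hg0⟩ := ihd c (by omega) _ hfdel
        -- φ' = f - D g0 vanishes on v-free faces of cardinality c
        have hφ'del : ∀ H, H ∈ Δ.faces → v ∉ H → H.card = c → f H - Dop K g0 H = 0 := by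
          intro H hH hvH hcH
          have := hg0 H ((Δ.mem_del_iff v H).mpr ⟨hH, hvH⟩) hcH
          rw [this, if_neg hvH, sub_self]
        -- step 2: the cocycle on the link
        set φ' : Finset (Fin n) → K := fun G => f G - Dop K g0 G with hφ'def
        have hχ : ∀ H ∈ (Δ.link v).faces, H.card = (c - 1) + 1 →
            Dop K (fun H' => if v ∈ H' then 0 else sgn K v H' * φ' (insert v H')) H = 0 := by
          intro H hHl hcH'
          have hcH : H.card = c := by omega
          obtain ⟨hHf, hvH, hiH⟩ := (Δ.mem_link_iff' v h1 H).mp hHl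
          have hiHc : (insert v H).card = c + 1 := by
            rw [Finset.card_insert_of_notMem hvH, hcH]
          have hDφ' : Dop K φ' (insert v H) = 0 := by
            rw [hφ'def, Dop_sub, hf _ hiH hiHc, Dop_Dop, sub_zero]
          rw [Dop, Finset.sum_insert hvH, Finset.erase_insert hvH] at hDφ'
          have hφ'H : φ' H = 0 := hφ'del H hHf hvH hcH
          rw [hφ'H, mul_zero, zero_add] at hDφ'
          have hsum0 : ∑ w ∈ H, sgn K w (insert v H) * φ' (insert v (H.erase w)) = 0 := by
            rw [← hDφ']
            refine Finset.sum_congr rfl fun w hw => ?_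
            rw [Finset.erase_insert_of_ne (fun he => hvH (by rw [he]; exact hw))]
          calc Dop K (fun H' => if v ∈ H' then 0 else sgn K v H' * φ' (insert v H')) H
              = ∑ w ∈ H, -(sgn K v H) * (sgn K w (insert v H) * φ' (insert v (H.erase w))) := by
                rw [Dop]
                refine Finset.sum_congr rfl fun w hw => ?_
                rw [if_neg (fun hc' => hvH (Finset.erase_subset _ _ hc'))]
                linear_combination φ' (insert v (H.erase w)) * sgn_B (K := K) hvH hw
            _ = -(sgn K v H) * ∑ w ∈ H, sgn K w (insert v H) * φ' (insert v (H.erase w)) := by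
                rw [Finset.mul_sum]
            _ = 0 := by rw [hsum0, mul_zero]
        obtain ⟨θ, hθ⟩ := ihl (c - 1) (by omega) _ hχ
        -- step 3: assemble
        refine ⟨fun G => g0 G +
          (if v ∈ G then -(sgn K v (G.erase v) * θ (G.erase v)) else 0), fun F hF hcF => ?_⟩
        have hDadd := Dop_add (K := K) g0
          (fun G => if v ∈ G then -(sgn K v (G.erase v) * θ (G.erase v)) else 0) F
        rw [hDadd]
        by_cases hvF : v ∈ F
        · -- D g1 F = φ' F
          have hvH : v ∉ F.erase v := Finset.notMem_erase _ _
          have hins : insert v (F.erase v) = F := Finset.insert_erase hvF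
          have hHl : F.erase v ∈ (Δ.link v).faces := by
            rw [Δ.mem_link_iff' v h1]
            exact ⟨Δ.down F hF _ (Finset.erase_subset _ _), hvH, by rw [hins]; exact hF⟩
          have hcH : (F.erase v).card = c - 1 := by
            rw [Finset.card_erase_of_mem hvF, hcF]
          have hg1 : Dop K (fun G => if v ∈ G then -(sgn K v (G.erase v) * θ (G.erase v)) else 0) F
              = φ' F := by
            conv_lhs => rw [← hins]
            rw [Dop, Finset.sum_insert hvH, Finset.erase_insert hvH, if_neg hvH, mul_zero,
              zero_add]
            have hterm : ∀ w ∈ F.erase v,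
                sgn K w (insert v (F.erase v)) *
                  ((fun G => if v ∈ G then -(sgn K v (G.erase v) * θ (G.erase v)) else 0)
                    ((insert v (F.erase v)).erase w))
                = sgn K v (F.erase v) * (sgn K w (F.erase v) * θ ((F.erase v).erase w)) := by
              intro w hw
              have hne : v ≠ w := fun he => (Finset.mem_erase.mp hw).1 he.symm
              rw [Finset.erase_insert_of_ne hne]
              simp only
              rw [if_pos (Finset.mem_insert_self v _),
                Finset.erase_insert (fun hc' => hvH (Finset.erase_subset _ _ hc'))]
              linear_combination (-(θ ((F.erase v).erase w))) * sgn_A (K := K) hvH hw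
            rw [Finset.sum_congr rfl hterm, ← Finset.mul_sum]
            have hDθ : ∑ w ∈ F.erase v, sgn K w (F.erase v) * θ ((F.erase v).erase w)
                = (if v ∈ F.erase v then 0
                    else sgn K v (F.erase v) * φ' (insert v (F.erase v))) := by
              have := hθ (F.erase v) hHl hcH
              rw [Dop] at this
              exact this
            rw [hDθ, if_neg hvH, hins]
            have := sgn_sq (K := K) v (F.erase v)
            linear_combination φ' F * this
          rw [hg1, hφ'def]
          ring
        · -- v ∉ F : D g1 F = 0 and D g0 F = f F
          have hg1 : Dop K (fun G => if v ∈ G then -(sgn K v (G.erase v) * θ (G.erase v)) else 0) F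
              = 0 := by
            rw [Dop]
            refine Finset.sum_eq_zero fun w hw => ?_
            rw [if_neg (fun hc' => hvF (Finset.erase_subset _ _ hc')), mul_zero]
          have hg0F := hg0 F ((Δ.mem_del_iff v F).mpr ⟨hF, hvF⟩) hcF
          rw [hg1, hg0F, if_neg hvF, add_zero]
    · -- v is not a vertex of Δ : the deletion equals Δ
      have hdel : Δ.del v = Δ := Δ.del_eq_self v h1
      rw [hdel] at ihd
      exact ihd c hc f hf

end VDProof4
section VDProof5

open Finset

variable {n : ℕ}

/-- extension of a cochain by zero to all finsets -/
noncomputable def extC (Δ : SC n) (K : Type) [Field K] (s : ℕ) (φ : Cch Δ K s) :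
    Finset (Fin n) → K :=
  fun F => if h' : F ∈ Δ.faces ∧ F.card = s then φ ⟨F, h'⟩ else 0

theorem deltaLin_eq_Dop (Δ : SC n) (K : Type) [Field K] (s : ℕ) (φ : Cch Δ K s)
    (F : Finset (Fin n)) (hF : F ∈ Δ.faces ∧ F.card = s + 1) :
    deltaLin Δ K s φ ⟨F, hF⟩ = Dop K (extC Δ K s φ) F := by
  rw [Dop]
  simp only [deltaLin, LinearMap.coe_mk, AddHom.coe_mk]
  have hstep : ∀ v ∈ F.attach,
      ((-1 : K) ^ ((F.filter (fun w => w < v.1)).card)) *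
        φ ⟨F.erase v.1, ⟨Δ.down F hF.1 _ (Finset.erase_subset _ _), by
          simp [Finset.card_erase_of_mem v.2, hF.2]⟩⟩
      = sgn K v.1 F * extC Δ K s φ (F.erase v.1) := by
    intro v _
    have hcond : F.erase v.1 ∈ Δ.faces ∧ (F.erase v.1).card = s :=
      ⟨Δ.down F hF.1 _ (Finset.erase_subset _ _), by
        simp [Finset.card_erase_of_mem v.2, hF.2]⟩
    rw [extC, dif_pos hcond, sgn]
  rw [Finset.sum_congr rfl hstep]
  exact Finset.sum_attach F (fun x => sgn K x F * extC Δ K s φ (F.erase x))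

theorem vd_not_hredne {Δ : SC n} (h : IsVD Δ) (K : Type) [Field K] (i : ℕ)
    (hi : (i : ℤ) < Δ.dim) : ¬ HredNe Δ K i := by
  rintro ⟨φ, hcoc, hnb⟩
  have hsup : i + 1 < Δ.faces.sup Finset.card := by
    rw [SC.dim] at hi
    omega
  have hcoc' : ∀ F ∈ Δ.faces, F.card = (i + 1) + 1 →
      Dop K (extC Δ K (i + 1) φ) F = 0 := by
    intro F hFm hc
    rw [← deltaLin_eq_Dop Δ K (i + 1) φ F ⟨hFm, hc⟩, hcoc]
    rfl
  obtain ⟨g, hg⟩ := vd_vanish h K (i + 1) hsup _ hcoc'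
  apply hnb (fun G => g G.1)
  funext Fp
  obtain ⟨F, hF⟩ := Fp
  rw [deltaLin_eq_Dop Δ K i _ F hF]
  have hsame : Dop K (extC Δ K i (fun G => g G.1)) F = Dop K g F := by
    rw [Dop, Dop]
    refine Finset.sum_congr rfl fun w hw => ?_
    have hcond : F.erase w ∈ Δ.faces ∧ (F.erase w).card = i :=
      ⟨Δ.down F hF.1 _ (Finset.erase_subset _ _), by
        simp [Finset.card_erase_of_mem hw, hF.2]⟩
    rw [extC, dif_pos hcond]
  rw [hsame, hg F hF.1 hF.2, extC, dif_pos hF]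

end VDProof5
section VDProof6

open Finset

variable {n : ℕ}

theorem SC.mem_linkF_iff (Δ : SC n) (S G : Finset (Fin n)) :
    G ∈ (Δ.linkF S).faces ↔ G = ∅ ∨ (G ∈ Δ.faces ∧ G ∩ S = ∅ ∧ G ∪ S ∈ Δ.faces) := by
  simp [SC.linkF, and_assoc]

theorem SC.linkF_empty (Δ : SC n) : Δ.linkF ∅ = Δ := by
  apply SC.ext'
  ext G
  rw [Δ.mem_linkF_iff]
  constructor
  · rintro (rfl | h)
    · exact Δ.empty_mem
    · exact h.1
  · intro h
    exact Or.inr ⟨h, by simp, by simpa using h⟩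

theorem SC.linkF_facet_card (Δ : SC n) {S : Finset (Fin n)} (hp : Δ.Pure)
    (hS : S ∈ Δ.faces) {T : Finset (Fin n)} (hT : (Δ.linkF S).isFacet T) :
    T.card = Δ.faces.sup Finset.card - S.card := by
  have hTS : T ∩ S = ∅ ∧ T ∪ S ∈ Δ.faces := by
    rcases (Δ.mem_linkF_iff S T).mp hT.1 with rfl | ⟨hTf, h2, h3⟩
    · exact ⟨by simp, by simpa using hS⟩
    · exact ⟨h2, h3⟩
  obtain ⟨F, hF, hsub⟩ := Δ.exists_facet (T ∪ S) hTS.2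
  have hSF : S ⊆ F := Finset.subset_union_right.trans hsub
  have hTF : T ⊆ F := Finset.subset_union_left.trans hsub
  have hFS : F \ S ∈ (Δ.linkF S).faces := by
    rw [Δ.mem_linkF_iff]
    refine Or.inr ⟨Δ.down F hF.1 _ (Finset.sdiff_subset), Finset.sdiff_inter_self _ _, ?_⟩
    rw [Finset.sdiff_union_self_eq_union, Finset.union_eq_left.mpr hSF]
    exact hF.1
  have hTsub : T ⊆ F \ S := by
    intro x hx
    rw [Finset.mem_sdiff]
    exact ⟨hTF hx, fun hxS => by
      have : x ∈ T ∩ S := Finset.mem_inter.mpr ⟨hx, hxS⟩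
      rw [hTS.1] at this
      simp at this⟩
  have hTeq : T = F \ S := hT.2 _ hFS hTsub
  rw [hTeq, Finset.card_sdiff_of_subset hSF, Δ.facet_card hp hF]

theorem SC.pure_linkF (Δ : SC n) {S : Finset (Fin n)} (hp : Δ.Pure) (hS : S ∈ Δ.faces) :
    (Δ.linkF S).Pure := by
  intro T1 T2 h1 h2
  rw [Δ.linkF_facet_card hp hS h1, Δ.linkF_facet_card hp hS h2]

theorem SC.linkF_erase (Δ : SC n) {S : Finset (Fin n)} {v : Fin n} (hvS : v ∈ S)
    (hS : S ∈ Δ.faces) : Δ.linkF S = (Δ.link v).linkF (S.erase v) := by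
  apply SC.ext'
  ext G
  rw [Δ.mem_linkF_iff, (Δ.link v).mem_linkF_iff]
  constructor
  · rintro (rfl | ⟨h1, h2, h3⟩)
    · exact Or.inl rfl
    · have hvG : v ∉ G := fun hv => by
        have : v ∈ G ∩ S := Finset.mem_inter.mpr ⟨hv, hvS⟩
        rw [h2] at this; simp at this
      refine Or.inr ⟨?_, ?_, ?_⟩
      · rw [Δ.mem_link_iff]
        refine Or.inr ⟨h1, hvG, Δ.down _ h3 _ ?_⟩
        exact Finset.insert_subset (Finset.mem_union_right G hvS) Finset.subset_union_left
      · apply Finset.eq_empty_of_forall_notMem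
        intro x hx
        rw [Finset.mem_inter, Finset.mem_erase] at hx
        have : x ∈ G ∩ S := Finset.mem_inter.mpr ⟨hx.1, hx.2.2⟩
        rw [h2] at this; simp at this
      · rw [Δ.mem_link_iff]
        refine Or.inr ⟨Δ.down _ h3 _ ?_, ?_, ?_⟩
        · exact Finset.union_subset_union_right (Finset.erase_subset _ _)
        · simp only [Finset.mem_union, Finset.mem_erase]
          rintro (hv | hv)
          · exact hvG hv
          · exact hv.1 rfl
        · have : insert v (G ∪ S.erase v) = G ∪ S := by
            rw [Finset.union_comm G (S.erase v), ← Finset.insert_union,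
              Finset.insert_erase hvS, Finset.union_comm]
          rw [this]; exact h3
  · rintro (rfl | ⟨h1, h2, h3⟩)
    · exact Or.inl rfl
    · rw [Δ.mem_link_iff] at h1 h3
      rcases h1 with rfl | ⟨h1f, hvG, h1i⟩
      · exact Or.inl rfl
      rcases h3 with he | ⟨h3f, hv3, h3i⟩
      · exact Or.inl (Finset.union_eq_empty.mp he).1
      · refine Or.inr ⟨h1f, ?_, ?_⟩
        · apply Finset.eq_empty_of_forall_notMem
          intro x hx
          rw [Finset.mem_inter] at hx
          by_cases hxv : x = v
          · exact hvG (hxv ▸ hx.1)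
          · have : x ∈ G ∩ S.erase v :=
              Finset.mem_inter.mpr ⟨hx.1, Finset.mem_erase.mpr ⟨hxv, hx.2⟩⟩
            rw [h2] at this; simp at this
        · have heq : insert v (G ∪ S.erase v) = G ∪ S := by
            rw [Finset.union_comm G (S.erase v), ← Finset.insert_union,
              Finset.insert_erase hvS, Finset.union_comm]
          rw [← heq]
          exact h3i

end VDProof6
section VDProof7

open Finset

variable {n : ℕ}

theorem SC.linkF_del (Δ : SC n) {S : Finset (Fin n)} {v : Fin n} (hvS : v ∉ S) :
    (Δ.linkF S).del v = (Δ.del v).linkF S := by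
  apply SC.ext'
  ext G
  rw [SC.mem_del_iff, Δ.mem_linkF_iff, (Δ.del v).mem_linkF_iff]
  constructor
  · rintro ⟨rfl | ⟨h1, h2, h3⟩, hvG⟩
    · exact Or.inl rfl
    · refine Or.inr ⟨(Δ.mem_del_iff v G).mpr ⟨h1, hvG⟩, h2,
        (Δ.mem_del_iff v _).mpr ⟨h3, ?_⟩⟩
      simp only [Finset.mem_union]
      rintro (h | h)
      · exact hvG h
      · exact hvS h
  · rintro (rfl | ⟨h1, h2, h3⟩)
    · exact ⟨Or.inl rfl, by simp⟩
    · rw [Δ.mem_del_iff] at h1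
      rw [(Δ).mem_del_iff] at h3
      exact ⟨Or.inr ⟨h1.1, h2, h3.1⟩, h1.2⟩

theorem SC.linkF_link (Δ : SC n) {S : Finset (Fin n)} {v : Fin n} (hvS : v ∉ S) :
    (Δ.linkF S).link v = (Δ.link v).linkF S := by
  apply SC.ext'
  ext G
  rw [(Δ.linkF S).mem_link_iff, (Δ.link v).mem_linkF_iff]
  constructor
  · rintro (rfl | ⟨h1, hvG, h2⟩)
    · exact Or.inl rfl
    · rw [Δ.mem_linkF_iff] at h1 h2
      rcases h1 with rfl | ⟨h1f, h1i, h1u⟩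
      · exact Or.inl rfl
      rcases h2 with he | ⟨h2f, h2i, h2u⟩
      · exact absurd (Finset.insert_ne_empty v G) (by simp [he])
      · refine Or.inr ⟨?_, h1i, ?_⟩
        · rw [Δ.mem_link_iff]
          exact Or.inr ⟨h1f, hvG, h2f⟩
        · rw [Δ.mem_link_iff]
          refine Or.inr ⟨h1u, ?_, ?_⟩
          · simp only [Finset.mem_union]
            rintro (h | h)
            · exact hvG h
            · exact hvS h
          · have : insert v (G ∪ S) = insert v G ∪ S := by
              rw [Finset.insert_union]
            rw [this]
            exact h2u
  · rintro (rfl | ⟨h1, h2, h3⟩)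
    · exact Or.inl rfl
    · rw [Δ.mem_link_iff] at h1 h3
      rcases h1 with rfl | ⟨h1f, hvG, h1i⟩
      · exact Or.inl rfl
      rcases h3 with he | ⟨h3f, h3v, h3i⟩
      · exact Or.inl (Finset.union_eq_empty.mp he).1
      · refine Or.inr ⟨?_, hvG, ?_⟩
        · rw [Δ.mem_linkF_iff]
          exact Or.inr ⟨h1f, h2, h3f⟩
        · rw [Δ.mem_linkF_iff]
          refine Or.inr ⟨h1i, ?_, ?_⟩
          · apply Finset.eq_empty_of_forall_notMem
            intro x hx
            rw [Finset.mem_inter, Finset.mem_insert] at hx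
            rcases hx.1 with rfl | hxG
            · exact hvS hx.2
            · have : x ∈ G ∩ S := Finset.mem_inter.mpr ⟨hxG, hx.2⟩
              rw [h2] at this; simp at this
          · rw [Finset.insert_union]
            exact h3i

theorem SC.linkF_link_trivial (Δ : SC n) {S : Finset (Fin n)} {v : Fin n}
    (hins : insert v S ∉ Δ.faces) :
    ((Δ.linkF S).link v).faces = {∅} := by
  ext G
  rw [(Δ.linkF S).mem_link_iff, Finset.mem_singleton]
  constructor
  · rintro (rfl | ⟨h1, hvG, h2⟩)
    · rfl
    · exfalso
      rw [Δ.mem_linkF_iff] at h2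
      rcases h2 with he | ⟨h2f, h2i, h2u⟩
      · exact absurd (Finset.insert_ne_empty v G) (by simp [he])
      · apply hins
        apply Δ.down _ h2u
        apply Finset.insert_subset
        · exact Finset.mem_union_left S (Finset.mem_insert_self v G)
        · exact Finset.subset_union_right
  · rintro rfl
    exact Or.inl rfl

theorem vd_linkF {Δ : SC n} (h : IsVD Δ) :
    ∀ S ∈ Δ.faces, IsVD (Δ.linkF S) := by
  induction h with
  | triv Δ h =>
    intro S hS
    rw [h, Finset.mem_singleton] at hS
    subst hS
    rw [Δ.linkF_empty]
    exact IsVD.triv Δ h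
  | step Δ hp v hd hl ihd ihl =>
    intro S hS
    by_cases hSe : S = ∅
    · subst hSe
      rw [Δ.linkF_empty]
      exact IsVD.step Δ hp v hd hl
    by_cases hvS : v ∈ S
    · rw [Δ.linkF_erase hvS hS]
      apply ihl
      rw [Δ.mem_link_iff]
      refine Or.inr ⟨Δ.down S hS _ (Finset.erase_subset _ _), Finset.notMem_erase _ _, ?_⟩
      rw [Finset.insert_erase hvS]
      exact hS
    · refine IsVD.step _ (Δ.pure_linkF hp hS) v ?_ ?_
      · rw [Δ.linkF_del hvS]
        exact ihd S ((Δ.mem_del_iff v S).mpr ⟨hS, hvS⟩)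
      · by_cases hins : insert v S ∈ Δ.faces
        · rw [Δ.linkF_link hvS]
          apply ihl
          rw [Δ.mem_link_iff]
          exact Or.inr ⟨hS, hvS, hins⟩
        · exact IsVD.triv _ (Δ.linkF_link_trivial hins)

end VDProof7
section VDProof8

open Finset

variable {n : ℕ}

theorem vd_shellable {Δ : SC n} (h : IsVD Δ) : Shellable Δ := by
  induction h with
  | triv Δ h =>
    refine ⟨[∅], by simp, ?_, ?_⟩
    · intro F
      constructor
      · intro hF
        have := h ▸ hF.1
        simp only [Finset.mem_singleton] at this
        simp [this]
      · intro hF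
        simp only [List.mem_singleton] at hF
        subst hF
        refine ⟨h ▸ (by simp), fun G hG _ => ?_⟩
        have := h ▸ hG
        simp only [Finset.mem_singleton] at this
        exact this.symm
    · intro k hk hk0
      simp only [List.length_singleton] at hk
      omega
  | step Δ hp v hd hl ihd ihl =>
    by_cases h1 : ({v} : Finset (Fin n)) ∈ Δ.faces
    · obtain ⟨Ll, hLlnd, hLlmem, hLlsh⟩ := ihl
      have hLlfacet : ∀ G ∈ Ll, (Δ.link v).isFacet G := fun G hG => (hLlmem G).mpr hG
      have hLlv : ∀ G ∈ Ll, v ∉ G := fun G hG =>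
        (SC.facet_of_facet_link h1 (hLlfacet G hG)).2
      have hLlF : ∀ G ∈ Ll, Δ.isFacet (insert v G) := fun G hG =>
        (SC.facet_of_facet_link h1 (hLlfacet G hG)).1
      have hmapnd : (Ll.map (insert v)).Nodup := by
        refine List.Nodup.map_on ?_ hLlnd
        intro x hx y hy hxy
        have : (insert v x).erase v = (insert v y).erase v := by rw [hxy]
        rwa [Finset.erase_insert (hLlv x hx), Finset.erase_insert (hLlv y hy)] at this
      by_cases hcone : ∀ F0, Δ.isFacet F0 → v ∈ F0
      · -- cone case
        refine ⟨Ll.map (insert v), hmapnd, ?_, ?_⟩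
        · intro F
          constructor
          · intro hF
            have hvF : v ∈ F := hcone F hF
            have := SC.facet_link_of_facet h1 hF hvF
            have hmem : F.erase v ∈ Ll := (hLlmem _).mp this
            have : insert v (F.erase v) ∈ Ll.map (insert v) := List.mem_map_of_mem hmem
            rwa [Finset.insert_erase hvF] at this
          · intro hF
            obtain ⟨G, hG, rfl⟩ := List.mem_map.mp hF
            exact hLlF G hG
        · simp only [List.get_eq_getElem, List.length_map, List.getElem_map] at hLlsh ⊢
          intro k hk hk0 G hGsub hGear
          obtain ⟨i, hi, hik, hGi⟩ := hGear
          have hvk : v ∉ Ll[k]'hk := hLlv _ (List.getElem_mem hk)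
          have hsubk : G.erase v ⊆ Ll[k]'hk := by
            intro x hx
            obtain ⟨hxv, hxG⟩ := Finset.mem_erase.mp hx
            rcases Finset.mem_insert.mp (hGsub hxG) with rfl | hh
            · exact absurd rfl hxv
            · exact hh
          have hsubi : G.erase v ⊆ Ll[i]'hi := by
            intro x hx
            obtain ⟨hxv, hxG⟩ := Finset.mem_erase.mp hx
            rcases Finset.mem_insert.mp (hGi hxG) with rfl | hh
            · exact absurd rfl hxv
            · exact hh
          obtain ⟨H, hGH, hHk, hHcard, j, hj, hjk, hHj⟩ :=
            hLlsh k hk hk0 (G.erase v) hsubk ⟨i, hi, hik, hsubi⟩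
          have hvH : v ∉ H := fun hc => hvk (hHk hc)
          -- the k-th facet of the link is nonempty
          have hkpos : 0 < (Ll[k]'hk).card := by
            rcases Finset.card_pos.mpr with _
            by_contra hc
            push_neg at hc
            have hke : Ll[k]'hk = ∅ := Finset.card_eq_zero.mp (by omega)
            have hfk := hLlfacet _ (List.getElem_mem hk)
            have hfi := hLlfacet _ (List.getElem_mem hi)
            have : (Ll[k]'hk) = Ll[i]'hi :=
              hfk.2 _ hfi.1 (hke ▸ Finset.empty_subset _)
            exact absurd (hLlnd.getElem_inj_iff.mp this) (by omega)
          refine ⟨insert v H, ?_, Finset.insert_subset_insert v hHk, ?_, ?_⟩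
          · intro x hx
            by_cases hxv : x = v
            · exact hxv ▸ Finset.mem_insert_self v H
            · exact Finset.mem_insert_of_mem (hGH (Finset.mem_erase.mpr ⟨hxv, hx⟩))
          · rw [Finset.card_insert_of_notMem hvH, Finset.card_insert_of_notMem hvk]
            omega
          · exact ⟨j, by simpa using hj, hjk, Finset.insert_subset_insert v hHj⟩
      · push_neg at hcone
        obtain ⟨F0, hF0, hv0⟩ := hcone
        obtain ⟨Ld, hLdnd, hLdmem, hLdsh⟩ := ihd
        have hpd : (Δ.del v).Pure := SC.isVD_pure hd
        have hLdfacet : ∀ F ∈ Ld, Δ.isFacet F := fun F hF =>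
          SC.facet_of_facet_del hp hpd hF0 hv0 ((hLdmem F).mpr hF)
        have hLdv : ∀ F ∈ Ld, v ∉ F := fun F hF =>
          ((Δ.mem_del_iff v F).mp ((hLdmem F).mpr hF).1).2
        refine ⟨Ld ++ Ll.map (insert v), ?_, ?_, ?_⟩
        · refine hLdnd.append hmapnd ?_
          intro x hxd hxm
          obtain ⟨G, hG, rfl⟩ := List.mem_map.mp hxm
          exact hLdv _ hxd (Finset.mem_insert_self v G)
        · intro F
          constructor
          · intro hF
            rw [List.mem_append]
            by_cases hvF : v ∈ F
            · right
              have hmem : F.erase v ∈ Ll := (hLlmem _).mp (SC.facet_link_of_facet h1 hF hvF)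
              have : insert v (F.erase v) ∈ Ll.map (insert v) := List.mem_map_of_mem hmem
              rwa [Finset.insert_erase hvF] at this
            · left
              exact (hLdmem F).mp (SC.facet_del_of_facet hF hvF)
          · intro hF
            rcases List.mem_append.mp hF with hF | hF
            · exact hLdfacet F hF
            · obtain ⟨G, hG, rfl⟩ := List.mem_map.mp hF
              exact hLlF G hG
        · simp only [List.get_eq_getElem] at hLdsh hLlsh
          simp only [List.get_eq_getElem, List.length_append, List.length_map]
          intro k hk hk0 G hGsub hGear
          by_cases hka : k < Ld.length
          · obtain ⟨i, hi, hik, hGi⟩ := hGear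
            have hia : i < Ld.length := lt_trans hik hka
            rw [List.getElem_append_left hka] at hGsub
            rw [List.getElem_append_left hia] at hGi
            obtain ⟨G', hGG', hG'k, hG'c, j, hj, hjk, hG'j⟩ :=
              hLdsh k hka hk0 G hGsub ⟨i, hia, hik, hGi⟩
            refine ⟨G', hGG', ?_, ?_, j, by omega, hjk, ?_⟩
            · rw [List.getElem_append_left hka]; exact hG'k
            · rw [List.getElem_append_left hka]; exact hG'c
            · rw [List.getElem_append_left (lt_of_lt_of_le hj (le_refl _))]; exact hG'j
          · push_neg at hka
            have hk' : k - Ld.length < Ll.length := by omega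
            have hLk : (Ld ++ Ll.map (insert v))[k]'(by simpa using hk)
                = insert v (Ll[k - Ld.length]'hk') := by
              rw [List.getElem_append_right hka, List.getElem_map]
            have hvk : v ∉ Ll[k - Ld.length]'hk' := hLlv _ (List.getElem_mem hk')
            rw [hLk] at hGsub
            by_cases hvG : v ∈ G
            · obtain ⟨i, hi, hik, hGi⟩ := hGear
              have hia : Ld.length ≤ i := by
                by_contra hc
                push_neg at hc
                rw [List.getElem_append_left hc] at hGi
                exact hLdv _ (List.getElem_mem hc) (hGi hvG)
              have hi' : i - Ld.length < Ll.length := by omega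
              have hLi : (Ld ++ Ll.map (insert v))[i]'(by simpa using hi)
                  = insert v (Ll[i - Ld.length]'hi') := by
                rw [List.getElem_append_right hia, List.getElem_map]
              rw [hLi] at hGi
              have hsubk : G.erase v ⊆ Ll[k - Ld.length]'hk' := by
                intro x hx
                obtain ⟨hxv, hxG⟩ := Finset.mem_erase.mp hx
                rcases Finset.mem_insert.mp (hGsub hxG) with rfl | hh
                · exact absurd rfl hxv
                · exact hh
              have hsubi : G.erase v ⊆ Ll[i - Ld.length]'hi' := by
                intro x hx
                obtain ⟨hxv, hxG⟩ := Finset.mem_erase.mp hx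
                rcases Finset.mem_insert.mp (hGi hxG) with rfl | hh
                · exact absurd rfl hxv
                · exact hh
              obtain ⟨H, hGH, hHk, hHcard, j, hj, hjk, hHj⟩ :=
                hLlsh (k - Ld.length) hk' (by omega) (G.erase v) hsubk
                  ⟨i - Ld.length, hi', by omega, hsubi⟩
              have hvH : v ∉ H := fun hc => hvk (hHk hc)
              have hkpos : 0 < (Ll[k - Ld.length]'hk').card := by
                by_contra hc
                push_neg at hc
                have hke : Ll[k - Ld.length]'hk' = ∅ := Finset.card_eq_zero.mp (by omega)
                have hfk := hLlfacet _ (List.getElem_mem hk')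
                have hfi := hLlfacet _ (List.getElem_mem hi')
                have heq : (Ll[k - Ld.length]'hk') = Ll[i - Ld.length]'hi' :=
                  hfk.2 _ hfi.1 (hke ▸ Finset.empty_subset _)
                exact absurd (hLlnd.getElem_inj_iff.mp heq) (by omega)
              refine ⟨insert v H, ?_, ?_, ?_, Ld.length + j, by omega, by omega, ?_⟩
              · intro x hx
                by_cases hxv : x = v
                · exact hxv ▸ Finset.mem_insert_self v H
                · exact Finset.mem_insert_of_mem (hGH (Finset.mem_erase.mpr ⟨hxv, hx⟩))
              · rw [hLk]; exact Finset.insert_subset_insert v hHk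
              · rw [hLk, Finset.card_insert_of_notMem hvH, Finset.card_insert_of_notMem hvk]
                omega
              · have hLj : (Ld ++ Ll.map (insert v))[Ld.length + j]'(by
                    simp only [List.length_append, List.length_map]; omega)
                    = insert v (Ll[j]'hj) := by
                  rw [List.getElem_append_right (Nat.le_add_right _ _), List.getElem_map]
                  simp only [Nat.add_sub_cancel_left]
                rw [hLj]
                exact Finset.insert_subset_insert v hHj
            · have hGk : G ⊆ Ll[k - Ld.length]'hk' := by
                intro x hx
                rcases Finset.mem_insert.mp (hGsub hx) with rfl | hh
                · exact absurd hx hvG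
                · exact hh
              have hkmem : Ll[k - Ld.length]'hk' ∈ (Δ.del v).faces := by
                rw [SC.mem_del_iff]
                exact ⟨((Δ.mem_link_iff' v h1 _).mp
                  (hLlfacet _ (List.getElem_mem hk')).1).1, hvk⟩
              obtain ⟨D, hD, hsubD⟩ := (Δ.del v).exists_facet _ hkmem
              obtain ⟨j, hj, hjEq⟩ := List.getElem_of_mem ((hLdmem D).mp hD)
              refine ⟨Ll[k - Ld.length]'hk', hGk, ?_, ?_, j, by omega, by omega, ?_⟩
              · rw [hLk]; exact Finset.subset_insert _ _
              · rw [hLk, Finset.card_insert_of_notMem hvk]; omega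
              · rw [List.getElem_append_left hj, hjEq]
                exact hsubD
    · have hdel : Δ.del v = Δ := Δ.del_eq_self v h1
      rw [hdel] at ihd
      exact ihd

end VDProof8
/-- Every vertex decomposable complex is shellable, and hence
Cohen-Macaulay over every field (via Reisner's criterion). -/
theorem vd_shellable_CM {n : ℕ} (Δ : SC n) (h : IsVD Δ) :
    Shellable Δ ∧ ∀ (K : Type) [Field K], IsCM Δ K := by
  refine ⟨vd_shellable h, ?_⟩
  intro K _ F hF i hi
  exact vd_not_hredne (vd_linkF h F hF) K i hi
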